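/- Let n ≥ 1, let A : Fin n → Fin n → Prop be a Boolean matrix, let U, V, W : {1,…,n} → Fin n → Prop be query vectors, and fix a stage given by 1 ≤ j ≤ n and 1 ≤ a ≤ n. Let G_{j,a} be the graph obtained from the query-gadget graph with current query index ℓ = j (vertex set {0,1,2,3} × Fin n × {0,…,n}; path edges (g,i,c) ~ (g,i,c+1) for 1 ≤ c ≤ n−1; query edges (g,i,0) ~ (g,i,q) for 1 ≤ q ≤ j whenever U q i for g ∈ {0,3}, V q i for g = 1, W q i for g = 2; cross edges (0,i,n) ~ (1,i',0) if A i i', (1,i',n) ~ (2,i'',0) if A i' i'', (2,i'',n) ~ (3,i''',0) if A i'' i''') by adding 2n² vertices s_{p,b} and t_{p,b} (p,b ∈ {1,…,n}) forming two paths in lexicographic order (s_{p,b} ~ s_{p,b+1} for b < n and s_{p,n} ~ s_{p+1,1} for p < n, and likewise for the t-vertices), together with the edges s_{p,b} ~ (0,b,0) and t_{p,b} ~ (3,b,n) for every pair (p,b) such that either p < j and 1 ≤ b ≤ n, or p = j and 1 ≤ b ≤ a. Then: (a) the extended distance in G_{j,a} (valued in ℕ∞) from s_{n,n} to t_{n,n}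 is at least 2n(n−j) + 2(n−a+1) + 3 + 4(n+1−j); and (b) it equals this value if and only if there exist b, c with U j a, V j b, W j c, A a b, A b c and A c a. -/

import Mathlib

namespace OMv3C2

abbrev Vtx (n : ℕ) := (Fin 4 × Fin n × Fin (n + 1)) ⊕ ((Fin n × Fin n) ⊕ (Fin n × Fin n))

@[simp] lemma vmk {k m : ℕ} (h : m < k) : ((⟨m, h⟩ : Fin k) : ℕ) = m := rfl

variable (n : ℕ) (A : Fin n → Fin n → Prop) (U Vq Wq : ℕ → Fin n → Prop) (j a : ℕ)

def R : Vtx n → Vtx n → Prop := fun x y =>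
      (∃ x' y' : Fin 4 × Fin n × Fin (n + 1), x = Sum.inl x' ∧ y = Sum.inl y' ∧
        ((x'.1 = y'.1 ∧ x'.2.1 = y'.2.1 ∧ 1 ≤ (x'.2.2 : ℕ) ∧
            (y'.2.2 : ℕ) = (x'.2.2 : ℕ) + 1) ∨
         (x'.1 = y'.1 ∧ x'.2.1 = y'.2.1 ∧ (x'.2.2 : ℕ) = 0 ∧ 1 ≤ (y'.2.2 : ℕ) ∧
            (y'.2.2 : ℕ) ≤ j ∧
            (((x'.1 : ℕ) = 0 ∨ (x'.1 : ℕ) = 3) → U (y'.2.2 : ℕ) x'.2.1) ∧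
            ((x'.1 : ℕ) = 1 → Vq (y'.2.2 : ℕ) x'.2.1) ∧
            ((x'.1 : ℕ) = 2 → Wq (y'.2.2 : ℕ) x'.2.1)) ∨
         ((y'.1 : ℕ) = (x'.1 : ℕ) + 1 ∧ (x'.2.2 : ℕ) = n ∧ (y'.2.2 : ℕ) = 0 ∧
            A x'.2.1 y'.2.1))) ∨
      (∃ p q : Fin n × Fin n, x = Sum.inr (Sum.inl p) ∧ y = Sum.inr (Sum.inl q) ∧
        ((p.1 = q.1 ∧ (q.2 : ℕ) = (p.2 : ℕ) + 1) ∨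
         ((p.2 : ℕ) = n - 1 ∧ (q.2 : ℕ) = 0 ∧ (q.1 : ℕ) = (p.1 : ℕ) + 1))) ∨
      (∃ p q : Fin n × Fin n, x = Sum.inr (Sum.inr p) ∧ y = Sum.inr (Sum.inr q) ∧
        ((p.1 = q.1 ∧ (q.2 : ℕ) = (p.2 : ℕ) + 1) ∨
         ((p.2 : ℕ) = n - 1 ∧ (q.2 : ℕ) = 0 ∧ (q.1 : ℕ) = (p.1 : ℕ) + 1))) ∨
      (∃ pb : Fin n × Fin n, x = Sum.inr (Sum.inl pb) ∧
        y = Sum.inl (⟨0, by omega⟩, pb.2, ⟨0, by omega⟩) ∧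
        ((pb.1 : ℕ) + 1 < j ∨ ((pb.1 : ℕ) + 1 = j ∧ (pb.2 : ℕ) + 1 ≤ a))) ∨
      (∃ pb : Fin n × Fin n, x = Sum.inr (Sum.inr pb) ∧
        y = Sum.inl (⟨3, by omega⟩, pb.2, ⟨n, by omega⟩) ∧
        ((pb.1 : ℕ) + 1 < j ∨ ((pb.1 : ℕ) + 1 = j ∧ (pb.2 : ℕ) + 1 ≤ a)))

def G : SimpleGraph (Vtx n) := SimpleGraph.fromRel (R n A U Vq Wq j a)

/-- lex index upper bound -/
def Sv : ℕ := (j - 1) * n + (a - 1)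
def Lv : ℕ := n * n - 1 - Sv n j a
def Dv : ℕ := 2 * Lv n j a + 4 * (n - j) + 9
def Mv : ℕ := Lv n j a + 4 * (n - j) + 8

def fval (x : Vtx n) : ℕ :=
  match x with
  | Sum.inl (g, _, c) =>
      Lv n j a + 1 + g.val * (n - j + 2) + (if (c : ℕ) = 0 then 0 else (c : ℕ) - j + 1)
  | Sum.inr (Sum.inl (p, b)) => min (n * n - 1 - (p.val * n + b.val)) (Lv n j a + 2)
  | Sum.inr (Sum.inr (p, b)) =>
      max (Mv n j a - 1) (Dv n j a - (n * n - 1 - (p.val * n + b.val)))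

section arith
variable {n j a : ℕ}

lemma lex_le {p q b c : ℕ} (hb : b < n) (h : p < q ∨ (p = q ∧ b ≤ c)) :
    p * n + b ≤ q * n + c := by
  rcases h with h | ⟨rfl, h⟩
  · have h2 : (p + 1) * n ≤ q * n := Nat.mul_le_mul_right n h
    rw [Nat.succ_mul] at h2; omega
  · omega

lemma lex_eq {p q b c : ℕ} (hb : b < n) (hc : c < n) (h : p * n + b = q * n + c) :
    p = q ∧ b = c := by
  rcases Nat.lt_trichotomy p q with h' | rfl | h'
  · have h2 : (p + 1) * n ≤ q * n := Nat.mul_le_mul_right n h'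
    rw [Nat.succ_mul] at h2; omega
  · omega
  · have h2 : (q + 1) * n ≤ p * n := Nat.mul_le_mul_right n h'
    rw [Nat.succ_mul] at h2; omega

lemma hS_le (hn : 1 ≤ n) (hjn : j ≤ n) (han : a ≤ n) : Sv n j a ≤ n * n - 1 := by
  have h1 : Sv n j a ≤ (n - 1) * n + (n - 1) :=
    lex_le (by omega) (by omega)
  have h2 : (n - 1 + 1) * n = (n - 1) * n + n := Nat.succ_mul _ _
  have h3 : (n - 1 + 1) * n = n * n := by congr 1; omega
  omega

lemma hLS (hn : 1 ≤ n) (hjn : j ≤ n) (han : a ≤ n) : Lv n j a + Sv n j a = n * n - 1 := by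
  have := hS_le hn hjn han
  unfold Lv; omega

lemma hLval (hn : 1 ≤ n) (hj1 : 1 ≤ j) (hjn : j ≤ n) (ha1 : 1 ≤ a) (han : a ≤ n) :
    Lv n j a = n * (n - j) + (n - a) := by
  have h1 : (j - 1) * n + (n - j + 1) * n = n * n := by
    rw [← Nat.add_mul]; congr 1; omega
  have h2 : (n - j + 1) * n = (n - j) * n + n := Nat.succ_mul _ _
  have h3 : (n - j) * n = n * (n - j) := Nat.mul_comm _ _
  have h4 := hLS hn hjn han
  unfold Sv at *
  omega

lemma hDval (hn : 1 ≤ n) (hj1 : 1 ≤ j) (hjn : j ≤ n) (ha1 : 1 ≤ a) (han : a ≤ n) :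
    Dv n j a = 2 * n * (n - j) + 2 * (n - a + 1) + 3 + 4 * (n + 1 - j) := by
  have h1 := hLval hn hj1 hjn ha1 han
  have h2 : 2 * n * (n - j) = 2 * (n * (n - j)) := by ring
  unfold Dv; omega

lemma sig_le (p b : Fin n) : p.val * n + b.val ≤ n * n - 1 := by
  have h1 : p.val * n + b.val ≤ (n - 1) * n + (n - 1) :=
    lex_le b.isLt (by have := p.isLt; have := b.isLt; omega)
  have h2 : (n - 1 + 1) * n = (n - 1) * n + n := Nat.succ_mul _ _
  have h3 : (n - 1 + 1) * n = n * n := by congr 1; have := p.isLt; omega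
  have := b.isLt
  omega

lemma cond_le (hj1 : 1 ≤ j) (ha1 : 1 ≤ a) {p b : Fin n}
    (h : p.val + 1 < j ∨ (p.val + 1 = j ∧ b.val + 1 ≤ a)) :
    p.val * n + b.val ≤ Sv n j a :=
  lex_le b.isLt (by omega)

lemma cond_eq (hj1 : 1 ≤ j) (hjn : j ≤ n) (ha1 : 1 ≤ a) (han : a ≤ n) {p b : Fin n}
    (h : p.val * n + b.val = Sv n j a) : p.val = j - 1 ∧ b.val = a - 1 :=
  lex_eq b.isLt (by omega) h

end arith


def Cnd (p b : Fin n) : Prop := p.val + 1 < j ∨ (p.val + 1 = j ∧ b.val + 1 ≤ a)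

def Pred (g : Fin 4) (q : ℕ) (i : Fin n) : Prop :=
  ((g.val = 0 ∨ g.val = 3) → U q i) ∧ (g.val = 1 → Vq q i) ∧ (g.val = 2 → Wq q i)

section adj
variable {n A U Vq Wq j a}

lemma adj_inl {g : Fin 4} {i : Fin n} {c : Fin (n+1)} {y : Vtx n}
    (h : (G n A U Vq Wq j a).Adj (Sum.inl (g, i, c)) y) :
    (∃ c' : Fin (n+1), y = Sum.inl (g, i, c') ∧
      ((1 ≤ c.val ∧ c'.val = c.val + 1) ∨ (1 ≤ c'.val ∧ c.val = c'.val + 1) ∨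
       (c.val = 0 ∧ 1 ≤ c'.val ∧ c'.val ≤ j ∧ Pred n U Vq Wq g c'.val i) ∨
       (c'.val = 0 ∧ 1 ≤ c.val ∧ c.val ≤ j ∧ Pred n U Vq Wq g c.val i))) ∨
    (∃ (g' : Fin 4) (i' : Fin n) (c' : Fin (n+1)), y = Sum.inl (g', i', c') ∧
      g'.val = g.val + 1 ∧ c.val = n ∧ c'.val = 0 ∧ A i i') ∨
    (∃ (g' : Fin 4) (i' : Fin n) (c' : Fin (n+1)), y = Sum.inl (g', i', c') ∧
      g.val = g'.val + 1 ∧ c'.val = n ∧ c.val = 0 ∧ A i' i) ∨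
    (∃ p : Fin n, y = Sum.inr (Sum.inl (p, i)) ∧ g.val = 0 ∧ c.val = 0 ∧ Cnd n j a p i) ∨
    (∃ p : Fin n, y = Sum.inr (Sum.inr (p, i)) ∧ g.val = 3 ∧ c.val = n ∧ Cnd n j a p i) := by
  rw [G, SimpleGraph.fromRel_adj] at h
  obtain ⟨-, h | h⟩ := h <;> simp only [R] at h <;> rcases h with h | h | h | h | h
  · -- R x y, gadget
    obtain ⟨x', ⟨g2, i2, c2⟩, hx, hy, hcase⟩ := h
    rw [Sum.inl.injEq] at hx; subst hx; subst hy
    rcases hcase with ⟨hg, hi, h1, h2⟩ | ⟨hg, hi, h0, h1, h2, hU, hV, hW⟩ | ⟨hg, hcn, hc0, hA⟩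
    · cases hg; cases hi; exact Or.inl ⟨c2, rfl, Or.inl ⟨h1, h2⟩⟩
    · cases hg; cases hi; exact Or.inl ⟨c2, rfl, Or.inr (Or.inr (Or.inl ⟨h0, h1, h2, hU, hV, hW⟩))⟩
    · exact Or.inr (Or.inl ⟨g2, i2, c2, rfl, hg, hcn, hc0, hA⟩)
  · obtain ⟨p, q, hx, hy, hcase⟩ := h; exact absurd hx (by simp)
  · obtain ⟨p, q, hx, hy, hcase⟩ := h; exact absurd hx (by simp)
  · obtain ⟨pb, hx, hy, hcase⟩ := h; exact absurd hx (by simp)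
  · obtain ⟨pb, hx, hy, hcase⟩ := h; exact absurd hx (by simp)
  · -- R y x, gadget : our vertex is y'-side
    obtain ⟨⟨g1, i1, c1⟩, y', hx, hy, hcase⟩ := h
    rw [Sum.inl.injEq] at hy; subst hy; subst hx
    rcases hcase with ⟨hg, hi, h1, h2⟩ | ⟨hg, hi, h0, h1, h2, hU, hV, hW⟩ | ⟨hg, hcn, hc0, hA⟩
    · cases hg; cases hi; exact Or.inl ⟨c1, rfl, Or.inr (Or.inl ⟨h1, h2⟩)⟩
    · cases hg; cases hi; exact Or.inl ⟨c1, rfl, Or.inr (Or.inr (Or.inr ⟨h0, h1, h2, hU, hV, hW⟩))⟩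
    · exact Or.inr (Or.inr (Or.inl ⟨g1, i1, c1, rfl, hg, hcn, hc0, hA⟩))
  · obtain ⟨p, q, hx, hy, hcase⟩ := h; exact absurd hy (by simp)
  · obtain ⟨p, q, hx, hy, hcase⟩ := h; exact absurd hy (by simp)
  · -- s-connection with our vertex the gadget side
    obtain ⟨pb, hx, hy, hcase⟩ := h
    rw [Sum.inl.injEq, Prod.mk.injEq, Prod.mk.injEq] at hy
    obtain ⟨hg, hi, hc⟩ := hy
    refine Or.inr (Or.inr (Or.inr (Or.inl ⟨pb.1, ?_, ?_, ?_, ?_⟩)))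
    · rw [hx, hi]
    · rw [hg]
    · rw [hc]
    · show Cnd n j a pb.1 i; rw [hi]; exact hcase
  · -- t-connection with our vertex the gadget side
    obtain ⟨pb, hx, hy, hcase⟩ := h
    rw [Sum.inl.injEq, Prod.mk.injEq, Prod.mk.injEq] at hy
    obtain ⟨hg, hi, hc⟩ := hy
    refine Or.inr (Or.inr (Or.inr (Or.inr ⟨pb.1, ?_, ?_, ?_, ?_⟩)))
    · rw [hx, hi]
    · rw [hg]
    · rw [hc]
    · show Cnd n j a pb.1 i; rw [hi]; exact hcase

lemma adj_s {p b : Fin n} {y : Vtx n}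
    (h : (G n A U Vq Wq j a).Adj (Sum.inr (Sum.inl (p, b))) y) :
    (∃ p' b' : Fin n, y = Sum.inr (Sum.inl (p', b')) ∧
      (p'.val * n + b'.val = p.val * n + b.val + 1 ∨
       p.val * n + b.val = p'.val * n + b'.val + 1)) ∨
    (∃ (g' : Fin 4) (c' : Fin (n+1)), y = Sum.inl (g', b, c') ∧ g'.val = 0 ∧ c'.val = 0 ∧
      Cnd n j a p b) := by
  rw [G, SimpleGraph.fromRel_adj] at h
  obtain ⟨-, h | h⟩ := h <;> simp only [R] at h <;> rcases h with h | h | h | h | h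
  · obtain ⟨x', y', hx, hy, hcase⟩ := h; exact absurd hx (by simp)
  · -- s-path, we are the first coordinate
    obtain ⟨⟨p1, b1⟩, ⟨p2, b2⟩, hx, hy, hcase⟩ := h
    rw [Sum.inr.injEq, Sum.inl.injEq] at hx; subst hy
    rw [Prod.mk.injEq] at hx; obtain ⟨h1, h2⟩ := hx; cases h1; cases h2
    refine Or.inl ⟨p2, b2, rfl, Or.inl ?_⟩
    dsimp only at hcase
    rcases hcase with ⟨hq, h2⟩ | ⟨h1, h2, h3⟩
    · cases hq; omega
    · have hs : p2.val * n = p.val * n + n := by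
        rw [h3]; exact Nat.succ_mul _ _
      have := b.isLt; omega
  · obtain ⟨q1, q2, hx, hy, hcase⟩ := h; exact absurd hx (by simp)
  · -- s-connection, we are the s side
    obtain ⟨⟨p1, b1⟩, hx, hy, hcase⟩ := h
    rw [Sum.inr.injEq, Sum.inl.injEq, Prod.mk.injEq] at hx
    obtain ⟨h1, h2⟩ := hx; cases h1; cases h2
    exact Or.inr ⟨⟨0, by omega⟩, ⟨0, by omega⟩, by rw [hy], rfl, rfl, hcase⟩
  · obtain ⟨pb, hx, hy, hcase⟩ := h; exact absurd hx (by simp)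
  · obtain ⟨x', y', hx, hy, hcase⟩ := h; exact absurd hy (by simp)
  · -- s-path, we are the second coordinate
    obtain ⟨⟨p1, b1⟩, ⟨p2, b2⟩, hx, hy, hcase⟩ := h
    rw [Sum.inr.injEq, Sum.inl.injEq] at hy; subst hx
    rw [Prod.mk.injEq] at hy; obtain ⟨h1, h2⟩ := hy; cases h1; cases h2
    refine Or.inl ⟨p1, b1, rfl, Or.inr ?_⟩
    dsimp only at hcase
    rcases hcase with ⟨hq, h2⟩ | ⟨h1, h2, h3⟩
    · cases hq; omega
    · have hs : p.val * n = p1.val * n + n := by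
        rw [h3]; exact Nat.succ_mul _ _
      have := b1.isLt; omega
  · obtain ⟨q1, q2, hx, hy, hcase⟩ := h; exact absurd hy (by simp)
  · obtain ⟨pb, hx, hy, hcase⟩ := h; exact absurd hy (by simp)
  · obtain ⟨pb, hx, hy, hcase⟩ := h; exact absurd hy (by simp)

lemma adj_t {p b : Fin n} {y : Vtx n}
    (h : (G n A U Vq Wq j a).Adj (Sum.inr (Sum.inr (p, b))) y) :
    (∃ p' b' : Fin n, y = Sum.inr (Sum.inr (p', b')) ∧
      (p'.val * n + b'.val = p.val * n + b.val + 1 ∨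
       p.val * n + b.val = p'.val * n + b'.val + 1)) ∨
    (∃ (g' : Fin 4) (c' : Fin (n+1)), y = Sum.inl (g', b, c') ∧ g'.val = 3 ∧ c'.val = n ∧
      Cnd n j a p b) := by
  rw [G, SimpleGraph.fromRel_adj] at h
  obtain ⟨-, h | h⟩ := h <;> simp only [R] at h <;> rcases h with h | h | h | h | h
  · obtain ⟨x', y', hx, hy, hcase⟩ := h; exact absurd hx (by simp)
  · obtain ⟨q1, q2, hx, hy, hcase⟩ := h; exact absurd hx (by simp)
  · obtain ⟨⟨p1, b1⟩, ⟨p2, b2⟩, hx, hy, hcase⟩ := h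
    rw [Sum.inr.injEq, Sum.inr.injEq] at hx; subst hy
    rw [Prod.mk.injEq] at hx; obtain ⟨h1, h2⟩ := hx; cases h1; cases h2
    refine Or.inl ⟨p2, b2, rfl, Or.inl ?_⟩
    dsimp only at hcase
    rcases hcase with ⟨hq, h2⟩ | ⟨h1, h2, h3⟩
    · cases hq; omega
    · have hs : p2.val * n = p.val * n + n := by
        rw [h3]; exact Nat.succ_mul _ _
      have := b.isLt; omega
  · obtain ⟨pb, hx, hy, hcase⟩ := h; exact absurd hx (by simp)
  · -- t-connection, we are the t side
    obtain ⟨⟨p1, b1⟩, hx, hy, hcase⟩ := h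
    rw [Sum.inr.injEq, Sum.inr.injEq, Prod.mk.injEq] at hx
    obtain ⟨h1, h2⟩ := hx; cases h1; cases h2
    exact Or.inr ⟨⟨3, by omega⟩, ⟨n, by omega⟩, by rw [hy], rfl, rfl, hcase⟩
  · obtain ⟨x', y', hx, hy, hcase⟩ := h; exact absurd hy (by simp)
  · obtain ⟨q1, q2, hx, hy, hcase⟩ := h; exact absurd hy (by simp)
  · obtain ⟨⟨p1, b1⟩, ⟨p2, b2⟩, hx, hy, hcase⟩ := h
    rw [Sum.inr.injEq, Sum.inr.injEq] at hy; subst hx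
    rw [Prod.mk.injEq] at hy; obtain ⟨h1, h2⟩ := hy; cases h1; cases h2
    refine Or.inl ⟨p1, b1, rfl, Or.inr ?_⟩
    dsimp only at hcase
    rcases hcase with ⟨hq, h2⟩ | ⟨h1, h2, h3⟩
    · cases hq; omega
    · have hs : p.val * n = p1.val * n + n := by
        rw [h3]; exact Nat.succ_mul _ _
      have := b1.isLt; omega
  · obtain ⟨pb, hx, hy, hcase⟩ := h; exact absurd hy (by simp)
  · obtain ⟨pb, hx, hy, hcase⟩ := h; exact absurd hy (by simp)

end adj


section lips
variable {n A U Vq Wq j a}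

lemma fval_lip (hn : 1 ≤ n) (hj1 : 1 ≤ j) (hjn : j ≤ n) (ha1 : 1 ≤ a) (han : a ≤ n)
    {x y : Vtx n} (h : (G n A U Vq Wq j a).Adj x y) :
    fval n j a y ≤ fval n j a x + 1 := by
  have hLS' := hLS (j := j) (a := a) hn hjn han
  rcases x with ⟨g, i, c⟩ | pb | pb
  · rcases adj_inl h with ⟨c', rfl, hc⟩ | ⟨g', i', c', rfl, hg, hcn, hc0, -⟩ |
      ⟨g', i', c', rfl, hg, hcn, hc0, -⟩ | ⟨p, rfl, hg, hc0, hcnd⟩ | ⟨p, rfl, hg, hcn, hcnd⟩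
    · simp only [fval]
      rcases hc with ⟨h1, h2⟩ | ⟨h1, h2⟩ | ⟨h1, h2, h3, -⟩ | ⟨h1, h2, h3, -⟩ <;>
        split_ifs <;> omega
    · simp only [fval]
      have hgs : g'.val * (n - j + 2) = g.val * (n - j + 2) + (n - j + 2) := by
        rw [hg]; exact Nat.succ_mul _ _
      split_ifs <;> omega
    · simp only [fval]
      have hgs : g.val * (n - j + 2) = g'.val * (n - j + 2) + (n - j + 2) := by
        rw [hg]; exact Nat.succ_mul _ _
      split_ifs <;> omega
    · simp only [fval]
      have hs1 : p.val * n + i.val ≤ Sv n j a := cond_le hj1 ha1 hcnd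
      have hs2 : p.val * n + i.val ≤ n * n - 1 := sig_le p i
      have hg0 : g.val * (n - j + 2) = 0 := by rw [hg]; ring
      split_ifs <;> omega
    · simp only [fval, Mv, Dv]
      have hs1 : p.val * n + i.val ≤ Sv n j a := cond_le hj1 ha1 hcnd
      have hs2 : p.val * n + i.val ≤ n * n - 1 := sig_le p i
      have hg3 : g.val * (n - j + 2) = 3 * (n - j + 2) := by rw [hg]
      split_ifs <;> omega
  · obtain ⟨p, b⟩ := pb
    rcases adj_s h with ⟨p', b', rfl, hc⟩ | ⟨g', c', rfl, hg, hc0, hcnd⟩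
    · simp only [fval]
      have hs2 : p.val * n + b.val ≤ n * n - 1 := sig_le p b
      have hs3 : p'.val * n + b'.val ≤ n * n - 1 := sig_le p' b'
      omega
    · simp only [fval]
      have hg0 : g'.val * (n - j + 2) = 0 := by rw [hg]; ring
      have hs1 : p.val * n + b.val ≤ Sv n j a := cond_le hj1 ha1 hcnd
      have hs2 : p.val * n + b.val ≤ n * n - 1 := sig_le p b
      split_ifs <;> omega
  · obtain ⟨p, b⟩ := pb
    rcases adj_t h with ⟨p', b', rfl, hc⟩ | ⟨g', c', rfl, hg, hcn, hcnd⟩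
    · simp only [fval, Mv, Dv]
      have hs2 : p.val * n + b.val ≤ n * n - 1 := sig_le p b
      have hs3 : p'.val * n + b'.val ≤ n * n - 1 := sig_le p' b'
      omega
    · simp only [fval, Mv, Dv]
      have hg3 : g'.val * (n - j + 2) = 3 * (n - j + 2) := by rw [hg]
      have hs1 : p.val * n + b.val ≤ Sv n j a := cond_le hj1 ha1 hcnd
      have hs2 : p.val * n + b.val ≤ n * n - 1 := sig_le p b
      split_ifs <;> omega

lemma fval_walk (hn : 1 ≤ n) (hj1 : 1 ≤ j) (hjn : j ≤ n) (ha1 : 1 ≤ a) (han : a ≤ n)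
    {u v : Vtx n} (w : (G n A U Vq Wq j a).Walk u v) :
    fval n j a v ≤ fval n j a u + w.length := by
  induction w with
  | nil => simp
  | cons hadj p ih =>
      have := fval_lip hn hj1 hjn ha1 han hadj
      simp only [SimpleGraph.Walk.length_cons]
      omega

end lips

section srcsnk
variable {n : ℕ} (hn : 1 ≤ n)

def src : Vtx n := Sum.inr (Sum.inl (⟨n - 1, by omega⟩, ⟨n - 1, by omega⟩))
def snk : Vtx n := Sum.inr (Sum.inr (⟨n - 1, by omega⟩, ⟨n - 1, by omega⟩))

variable {j a : ℕ}

lemma sig_nn (hn : 1 ≤ n) : (n - 1) * n + (n - 1) = n * n - 1 := by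
  have h2 : (n - 1 + 1) * n = (n - 1) * n + n := Nat.succ_mul _ _
  have h3 : (n - 1 + 1) * n = n * n := by congr 1; omega
  omega

lemma fval_src (hjn : j ≤ n) (han : a ≤ n) : fval n j a (src hn) = 0 := by
  simp only [src, fval, sig_nn hn]
  omega

lemma fval_snk (hjn : j ≤ n) (han : a ≤ n) : fval n j a (snk hn) = Dv n j a := by
  simp only [snk, fval, sig_nn hn, Mv, Dv]
  omega

end srcsnk

section lowerb
variable {n : ℕ} {A : Fin n → Fin n → Prop} {U Vq Wq : ℕ → Fin n → Prop} {j a : ℕ}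

lemma lower_bound (hn : 1 ≤ n) (hj1 : 1 ≤ j) (hjn : j ≤ n) (ha1 : 1 ≤ a) (han : a ≤ n) :
    (Dv n j a : ℕ∞) ≤ (G n A U Vq Wq j a).edist (src hn) (snk hn) := by
  rw [SimpleGraph.edist_eq_sInf]
  apply le_sInf
  rintro x ⟨w, rfl⟩
  have h1 := fval_walk (A := A) (U := U) (Vq := Vq) (Wq := Wq) hn hj1 hjn ha1 han w
  rw [fval_src hn hjn han, fval_snk hn hjn han] at h1
  have h1' : Dv n j a ≤ w.length := by omega
  have h2 : (Dv n j a : ℕ∞) ≤ (w.length : ℕ∞) := by exact_mod_cast h1'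
  simpa using h2

end lowerb


section upper
variable {n : ℕ} {A : Fin n → Fin n → Prop} {U Vq Wq : ℕ → Fin n → Prop} {j a : ℕ}

lemma estep {u v w : Vtx n} {k : ℕ} (h : (G n A U Vq Wq j a).Adj u v)
    (h2 : (G n A U Vq Wq j a).edist v w ≤ (k : ℕ∞)) :
    (G n A U Vq Wq j a).edist u w ≤ ((k + 1 : ℕ) : ℕ∞) := by
  have ht := SimpleGraph.edist_triangle (G := G n A U Vq Wq j a) (u := u) (v := v) (w := w)
  have ha : (G n A U Vq Wq j a).edist u v = 1 := SimpleGraph.edist_eq_one_iff_adj.mpr h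
  rw [ha] at ht
  refine ht.trans ?_
  have : ((k + 1 : ℕ) : ℕ∞) = 1 + (k : ℕ∞) := by push_cast; ring
  rw [this]
  exact add_le_add le_rfl h2

lemma etriangle {u v w : Vtx n} {k l : ℕ} (h1 : (G n A U Vq Wq j a).edist u v ≤ (k : ℕ∞))
    (h2 : (G n A U Vq Wq j a).edist v w ≤ (l : ℕ∞)) :
    (G n A U Vq Wq j a).edist u w ≤ ((k + l : ℕ) : ℕ∞) := by
  refine (SimpleGraph.edist_triangle (v := v)).trans ?_
  have : ((k + l : ℕ) : ℕ∞) = (k : ℕ∞) + (l : ℕ∞) := by push_cast; ring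
  rw [this]
  exact add_le_add h1 h2

lemma ecast {u v : Vtx n} {k l : ℕ} (h1 : (G n A U Vq Wq j a).edist u v ≤ (k : ℕ∞))
    (h2 : k ≤ l) : (G n A U Vq Wq j a).edist u v ≤ (l : ℕ∞) :=
  h1.trans (by exact_mod_cast h2)

lemma adj_of_rel {x y : Vtx n} (hne : x ≠ y) (h : R n A U Vq Wq j a x y) :
    (G n A U Vq Wq j a).Adj x y := by
  rw [G, SimpleGraph.fromRel_adj]; exact ⟨hne, Or.inl h⟩

lemma adjP {g : Fin 4} {i : Fin n} {c c' : Fin (n+1)} (h1 : 1 ≤ c.val)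
    (h2 : c'.val = c.val + 1) :
    (G n A U Vq Wq j a).Adj (Sum.inl (g, i, c)) (Sum.inl (g, i, c')) := by
  apply adj_of_rel
  · intro hh; rw [Sum.inl.injEq, Prod.mk.injEq, Prod.mk.injEq] at hh
    have := congrArg Fin.val hh.2.2; omega
  · exact Or.inl ⟨(g, i, c), (g, i, c'), rfl, rfl, Or.inl ⟨rfl, rfl, h1, h2⟩⟩

lemma adjQ {g : Fin 4} {i : Fin n} {c c' : Fin (n+1)} (h0 : c.val = 0) (h1 : 1 ≤ c'.val)
    (h2 : c'.val ≤ j) (hP : Pred n U Vq Wq g c'.val i) :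
    (G n A U Vq Wq j a).Adj (Sum.inl (g, i, c)) (Sum.inl (g, i, c')) := by
  apply adj_of_rel
  · intro hh; rw [Sum.inl.injEq, Prod.mk.injEq, Prod.mk.injEq] at hh
    have := congrArg Fin.val hh.2.2; omega
  · exact Or.inl ⟨(g, i, c), (g, i, c'), rfl, rfl,
      Or.inr (Or.inl ⟨rfl, rfl, h0, h1, h2, hP.1, hP.2.1, hP.2.2⟩)⟩

lemma adjX {g g' : Fin 4} {i i' : Fin n} {c c' : Fin (n+1)} (hg : g'.val = g.val + 1)
    (hc : c.val = n) (hc' : c'.val = 0) (hA : A i i') :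
    (G n A U Vq Wq j a).Adj (Sum.inl (g, i, c)) (Sum.inl (g', i', c')) := by
  apply adj_of_rel
  · intro hh; rw [Sum.inl.injEq, Prod.mk.injEq] at hh
    have := congrArg Fin.val hh.1; omega
  · exact Or.inl ⟨(g, i, c), (g', i', c'), rfl, rfl, Or.inr (Or.inr ⟨hg, hc, hc', hA⟩)⟩

lemma adjS1 {p b b' : Fin n} (h : b'.val = b.val + 1) :
    (G n A U Vq Wq j a).Adj (Sum.inr (Sum.inl (p, b))) (Sum.inr (Sum.inl (p, b'))) := by
  apply adj_of_rel
  · intro hh; rw [Sum.inr.injEq, Sum.inl.injEq, Prod.mk.injEq] at hh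
    have := congrArg Fin.val hh.2; omega
  · exact Or.inr (Or.inl ⟨(p, b), (p, b'), rfl, rfl, Or.inl ⟨rfl, h⟩⟩)

lemma adjS2 {p p' b b' : Fin n} (h : b.val = n - 1) (h2 : b'.val = 0) (h3 : p'.val = p.val + 1) :
    (G n A U Vq Wq j a).Adj (Sum.inr (Sum.inl (p, b))) (Sum.inr (Sum.inl (p', b'))) := by
  apply adj_of_rel
  · intro hh; rw [Sum.inr.injEq, Sum.inl.injEq, Prod.mk.injEq] at hh
    have := congrArg Fin.val hh.1; omega
  · exact Or.inr (Or.inl ⟨(p, b), (p', b'), rfl, rfl, Or.inr ⟨h, h2, h3⟩⟩)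

lemma adjT1 {p b b' : Fin n} (h : b'.val = b.val + 1) :
    (G n A U Vq Wq j a).Adj (Sum.inr (Sum.inr (p, b))) (Sum.inr (Sum.inr (p, b'))) := by
  apply adj_of_rel
  · intro hh; rw [Sum.inr.injEq, Sum.inr.injEq, Prod.mk.injEq] at hh
    have := congrArg Fin.val hh.2; omega
  · exact Or.inr (Or.inr (Or.inl ⟨(p, b), (p, b'), rfl, rfl, Or.inl ⟨rfl, h⟩⟩))

lemma adjT2 {p p' b b' : Fin n} (h : b.val = n - 1) (h2 : b'.val = 0) (h3 : p'.val = p.val + 1) :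
    (G n A U Vq Wq j a).Adj (Sum.inr (Sum.inr (p, b))) (Sum.inr (Sum.inr (p', b'))) := by
  apply adj_of_rel
  · intro hh; rw [Sum.inr.injEq, Sum.inr.injEq, Prod.mk.injEq] at hh
    have := congrArg Fin.val hh.1; omega
  · exact Or.inr (Or.inr (Or.inl ⟨(p, b), (p', b'), rfl, rfl, Or.inr ⟨h, h2, h3⟩⟩))

lemma adjCS {p b : Fin n} {g : Fin 4} {c : Fin (n+1)} (hg : g.val = 0) (hc : c.val = 0)
    (hcnd : Cnd n j a p b) :
    (G n A U Vq Wq j a).Adj (Sum.inr (Sum.inl (p, b))) (Sum.inl (g, b, c)) := by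
  apply adj_of_rel (by simp)
  exact Or.inr (Or.inr (Or.inr (Or.inl ⟨(p, b), rfl,
    congrArg Sum.inl (Prod.ext (Fin.ext hg) (Prod.ext rfl (Fin.ext hc))), hcnd⟩)))

lemma adjCT {p b : Fin n} {g : Fin 4} {c : Fin (n+1)} (hg : g.val = 3) (hc : c.val = n)
    (hcnd : Cnd n j a p b) :
    (G n A U Vq Wq j a).Adj (Sum.inr (Sum.inr (p, b))) (Sum.inl (g, b, c)) := by
  apply adj_of_rel (by simp)
  exact Or.inr (Or.inr (Or.inr (Or.inr ⟨(p, b), rfl,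
    congrArg Sum.inl (Prod.ext (Fin.ext hg) (Prod.ext rfl (Fin.ext hc))), hcnd⟩)))

end upper


section chains
variable {n : ℕ} {A : Fin n → Fin n → Prop} {U Vq Wq : ℕ → Fin n → Prop} {j a : ℕ}

lemma erow (g : Fin 4) (i : Fin n) :
    ∀ (d : ℕ) (c c' : Fin (n+1)), 1 ≤ c.val → c'.val = c.val + d →
      (G n A U Vq Wq j a).edist (Sum.inl (g, i, c)) (Sum.inl (g, i, c')) ≤ (d : ℕ∞)
  | 0, c, c', h1, h2 => by
      have : c' = c := Fin.ext (by (try simp only [vmk]); omega)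
      subst this; simp
  | d + 1, c, c', h1, h2 => by
      have hlt : c.val + 1 < n + 1 + 1 := by have := c'.isLt; omega
      have hc'' : ((⟨c.val + 1, by omega⟩ : Fin (n+1)) : ℕ) = c.val + 1 := rfl
      have := erow g i d ⟨c.val + 1, by omega⟩ c' (by omega) (by omega)
      exact estep (adjP h1 rfl) this

lemma erowS (p : Fin n) :
    ∀ (d : ℕ) (b b' : Fin n), b'.val = b.val + d →
      (G n A U Vq Wq j a).edist (Sum.inr (Sum.inl (p, b))) (Sum.inr (Sum.inl (p, b'))) ≤
        (d : ℕ∞)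
  | 0, b, b', h2 => by
      have : b' = b := Fin.ext (by (try simp only [vmk]); omega)
      subst this; simp
  | d + 1, b, b', h2 => by
      have := erowS p d ⟨b.val + 1, by have := b'.isLt; omega⟩ b' (by simp; omega)
      exact estep (adjS1 rfl) this

lemma erowT (p : Fin n) :
    ∀ (d : ℕ) (b b' : Fin n), b'.val = b.val + d →
      (G n A U Vq Wq j a).edist (Sum.inr (Sum.inr (p, b))) (Sum.inr (Sum.inr (p, b'))) ≤
        (d : ℕ∞)
  | 0, b, b', h2 => by
      have : b' = b := Fin.ext (by (try simp only [vmk]); omega)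
      subst this; simp
  | d + 1, b, b', h2 => by
      have := erowT p d ⟨b.val + 1, by have := b'.isLt; omega⟩ b' (by simp; omega)
      exact estep (adjT1 rfl) this

lemma ecolS (hn : 1 ≤ n) :
    ∀ (e : ℕ) (p b : Fin n), p.val = n - 1 - e → e ≤ n - 1 → b.val = 0 →
      (G n A U Vq Wq j a).edist (Sum.inr (Sum.inl (p, b))) (src hn) ≤
        ((e * n + (n - 1) : ℕ) : ℕ∞)
  | 0, p, b, hp, he, hb => by
      have h1 := erowS (A := A) (U := U) (Vq := Vq) (Wq := Wq) (j := j) (a := a)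
        p (n-1) b ⟨n-1, by omega⟩ (by simp; omega)
      have hps : p = ⟨n - 1, by omega⟩ := Fin.ext (by (try simp only [vmk]); omega)
      have hsrc : src hn = Sum.inr (Sum.inl (p, (⟨n - 1, by omega⟩ : Fin n))) := by
        rw [src, hps]
      rw [hsrc]; exact ecast h1 (by omega)
  | e + 1, p, b, hp, he, hb => by
      have h1 := erowS (A := A) (U := U) (Vq := Vq) (Wq := Wq) (j := j) (a := a)
        p (n-1) b ⟨n-1, by omega⟩ (by simp; omega)
      have h2 : (G n A U Vq Wq j a).Adj (Sum.inr (Sum.inl (p, (⟨n-1, by omega⟩ : Fin n))))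
          (Sum.inr (Sum.inl ((⟨p.val + 1, by omega⟩ : Fin n), b))) :=
        adjS2 rfl hb rfl
      have h3 := ecolS hn e ⟨p.val + 1, by omega⟩ b (by simp; omega) (by omega) hb
      have h4 := etriangle h1 (estep h2 h3)
      refine ecast h4 ?_
      have hs : (e + 1) * n = e * n + n := Nat.succ_mul _ _
      omega

lemma ecolT (hn : 1 ≤ n) :
    ∀ (e : ℕ) (p b : Fin n), p.val = n - 1 - e → e ≤ n - 1 → b.val = 0 →
      (G n A U Vq Wq j a).edist (Sum.inr (Sum.inr (p, b))) (snk hn) ≤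
        ((e * n + (n - 1) : ℕ) : ℕ∞)
  | 0, p, b, hp, he, hb => by
      have h1 := erowT (A := A) (U := U) (Vq := Vq) (Wq := Wq) (j := j) (a := a)
        p (n-1) b ⟨n-1, by omega⟩ (by simp; omega)
      have hps : p = ⟨n - 1, by omega⟩ := Fin.ext (by (try simp only [vmk]); omega)
      have hsnk : snk hn = Sum.inr (Sum.inr (p, (⟨n - 1, by omega⟩ : Fin n))) := by
        rw [snk, hps]
      rw [hsnk]; exact ecast h1 (by omega)
  | e + 1, p, b, hp, he, hb => by
      have h1 := erowT (A := A) (U := U) (Vq := Vq) (Wq := Wq) (j := j) (a := a)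
        p (n-1) b ⟨n-1, by omega⟩ (by simp; omega)
      have h2 : (G n A U Vq Wq j a).Adj (Sum.inr (Sum.inr (p, (⟨n-1, by omega⟩ : Fin n))))
          (Sum.inr (Sum.inr ((⟨p.val + 1, by omega⟩ : Fin n), b))) :=
        adjT2 rfl hb rfl
      have h3 := ecolT hn e ⟨p.val + 1, by omega⟩ b (by simp; omega) (by omega) hb
      have h4 := etriangle h1 (estep h2 h3)
      refine ecast h4 ?_
      have hs : (e + 1) * n = e * n + n := Nat.succ_mul _ _
      omega

/-- distance from `s_{j,a}` to the source `s_{n,n}`. -/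
lemma eS (hn : 1 ≤ n) (hj1 : 1 ≤ j) (hjn : j ≤ n) (ha1 : 1 ≤ a) (han : a ≤ n)
    (p b : Fin n) (hp : p.val = j - 1) (hb : b.val = a - 1) :
    (G n A U Vq Wq j a).edist (Sum.inr (Sum.inl (p, b))) (src hn) ≤ ((Lv n j a : ℕ) : ℕ∞) := by
  have hL := hLval (j := j) (a := a) hn hj1 hjn ha1 han
  have h1 := erowS (A := A) (U := U) (Vq := Vq) (Wq := Wq) (j := j) (a := a)
    p (n - a) b ⟨n-1, by omega⟩ (by simp; omega)
  rcases Nat.eq_or_lt_of_le hjn with hje | hjlt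
  · -- j = n : (p, n-1) is already the source
    have hps : p = ⟨n - 1, by omega⟩ := Fin.ext (by (try simp only [vmk]); omega)
    have hsrc : src hn = Sum.inr (Sum.inl (p, (⟨n - 1, by omega⟩ : Fin n))) := by
      rw [src, hps]
    have hz : n * (n - j) = 0 := by rw [hje]; simp
    rw [hsrc]; exact ecast h1 (by omega)
  · have h2 : (G n A U Vq Wq j a).Adj (Sum.inr (Sum.inl (p, (⟨n-1, by omega⟩ : Fin n))))
        (Sum.inr (Sum.inl ((⟨p.val + 1, by omega⟩ : Fin n), (⟨0, by omega⟩ : Fin n)))) :=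
      adjS2 rfl rfl rfl
    have h3 := ecolS (A := A) (U := U) (Vq := Vq) (Wq := Wq) (j := j) (a := a) hn (n - 1 - j)
      ⟨p.val + 1, by omega⟩ ⟨0, by omega⟩ (by simp; omega) (by omega) rfl
    have h4 := etriangle h1 (estep h2 h3)
    refine ecast h4 ?_
    have hs1 : (n - 1 - j) * n + n = (n - j) * n := by
      rw [← Nat.succ_mul]; congr 1; omega
    have hs2 : (n - j) * n = n * (n - j) := Nat.mul_comm _ _
    omega

lemma eT (hn : 1 ≤ n) (hj1 : 1 ≤ j) (hjn : j ≤ n) (ha1 : 1 ≤ a) (han : a ≤ n)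
    (p b : Fin n) (hp : p.val = j - 1) (hb : b.val = a - 1) :
    (G n A U Vq Wq j a).edist (Sum.inr (Sum.inr (p, b))) (snk hn) ≤ ((Lv n j a : ℕ) : ℕ∞) := by
  have hL := hLval (j := j) (a := a) hn hj1 hjn ha1 han
  have h1 := erowT (A := A) (U := U) (Vq := Vq) (Wq := Wq) (j := j) (a := a)
    p (n - a) b ⟨n-1, by omega⟩ (by simp; omega)
  rcases Nat.eq_or_lt_of_le hjn with hje | hjlt
  · have hps : p = ⟨n - 1, by omega⟩ := Fin.ext (by (try simp only [vmk]); omega)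
    have hsnk : snk hn = Sum.inr (Sum.inr (p, (⟨n - 1, by omega⟩ : Fin n))) := by
      rw [snk, hps]
    have hz : n * (n - j) = 0 := by rw [hje]; simp
    rw [hsnk]; exact ecast h1 (by omega)
  · have h2 : (G n A U Vq Wq j a).Adj (Sum.inr (Sum.inr (p, (⟨n-1, by omega⟩ : Fin n))))
        (Sum.inr (Sum.inr ((⟨p.val + 1, by omega⟩ : Fin n), (⟨0, by omega⟩ : Fin n)))) :=
      adjT2 rfl rfl rfl
    have h3 := ecolT (A := A) (U := U) (Vq := Vq) (Wq := Wq) (j := j) (a := a) hn (n - 1 - j)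
      ⟨p.val + 1, by omega⟩ ⟨0, by omega⟩ (by simp; omega) (by omega) rfl
    have h4 := etriangle h1 (estep h2 h3)
    refine ecast h4 ?_
    have hs1 : (n - 1 - j) * n + n = (n - j) * n := by
      rw [← Nat.succ_mul]; congr 1; omega
    have hs2 : (n - j) * n = n * (n - j) := Nat.mul_comm _ _
    omega

end chains


section upperfull
variable {n : ℕ} {A : Fin n → Fin n → Prop} {U Vq Wq : ℕ → Fin n → Prop} {j a : ℕ}

lemma upper_bound (hn : 1 ≤ n) (hj1 : 1 ≤ j) (hjn : j ≤ n) (ha1 : 1 ≤ a) (han : a ≤ n)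
    (a' b c : Fin n) (ha' : a'.val = a - 1)
    (hU : U j a') (hV : Vq j b) (hW : Wq j c) (hA1 : A a' b) (hA2 : A b c) (hA3 : A c a') :
    (G n A U Vq Wq j a).edist (src hn) (snk hn) ≤ ((Dv n j a : ℕ) : ℕ∞) := by
  set g0 : Fin 4 := ⟨0, by omega⟩
  set g1 : Fin 4 := ⟨1, by omega⟩
  set g2 : Fin 4 := ⟨2, by omega⟩
  set g3 : Fin 4 := ⟨3, by omega⟩
  set c0 : Fin (n+1) := ⟨0, by omega⟩
  set cj : Fin (n+1) := ⟨j, by omega⟩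
  set cn : Fin (n+1) := ⟨n, by omega⟩
  set pS : Fin n := ⟨j - 1, by omega⟩
  have hcnd : Cnd n j a pS a' := Or.inr ⟨by simp [pS]; omega, by omega⟩
  -- layer traversal
  have lay : ∀ (g : Fin 4) (i : Fin n), Pred n U Vq Wq g j i →
      (G n A U Vq Wq j a).edist (Sum.inl (g, i, c0)) (Sum.inl (g, i, cn)) ≤
        ((n - j + 1 : ℕ) : ℕ∞) := by
    intro g i hP
    have hq : (G n A U Vq Wq j a).Adj (Sum.inl (g, i, c0)) (Sum.inl (g, i, cj)) :=
      adjQ rfl (by simp [cj, c0]; omega) (by simp [cj]) hP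
    have hr := erow (A := A) (U := U) (Vq := Vq) (Wq := Wq) (j := j) (a := a)
      g i (n - j) cj cn (by simp [cj]; omega) (by simp [cj, cn]; omega)
    have := estep hq hr
    exact ecast this (by omega)
  have P0 : Pred n U Vq Wq g0 j a' :=
    ⟨fun _ => hU, fun h => absurd h (by simp [g0]), fun h => absurd h (by simp [g0])⟩
  have P1 : Pred n U Vq Wq g1 j b :=
    ⟨fun h => absurd h (by simp [g1]), fun _ => hV, fun h => absurd h (by simp [g1])⟩
  have P2 : Pred n U Vq Wq g2 j c :=
    ⟨fun h => absurd h (by simp [g2]), fun h => absurd h (by simp [g2]), fun _ => hW⟩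
  have P3 : Pred n U Vq Wq g3 j a' :=
    ⟨fun _ => hU, fun h => absurd h (by simp [g3]), fun h => absurd h (by simp [g3])⟩
  have X01 : (G n A U Vq Wq j a).Adj (Sum.inl (g0, a', cn)) (Sum.inl (g1, b, c0)) :=
    adjX rfl rfl rfl hA1
  have X12 : (G n A U Vq Wq j a).Adj (Sum.inl (g1, b, cn)) (Sum.inl (g2, c, c0)) :=
    adjX rfl rfl rfl hA2
  have X23 : (G n A U Vq Wq j a).Adj (Sum.inl (g2, c, cn)) (Sum.inl (g3, a', c0)) :=
    adjX rfl rfl rfl hA3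
  -- gadget distance
  have hg3 := lay g3 a' P3
  have hg2 := etriangle (lay g2 c P2) (estep X23 hg3)
  have hg1 := etriangle (lay g1 b P1) (estep X12 hg2)
  have hg0 := etriangle (lay g0 a' P0) (estep X01 hg1)
  -- source and sink tails
  have hsrc := eS (A := A) (U := U) (Vq := Vq) (Wq := Wq) hn hj1 hjn ha1 han pS a'
    (by simp [pS]) ha'
  have hsnk := eT (A := A) (U := U) (Vq := Vq) (Wq := Wq) hn hj1 hjn ha1 han pS a'
    (by simp [pS]) ha'
  have hCS : (G n A U Vq Wq j a).Adj (Sum.inr (Sum.inl (pS, a'))) (Sum.inl (g0, a', c0)) :=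
    adjCS rfl rfl hcnd
  have hCT : (G n A U Vq Wq j a).Adj (Sum.inr (Sum.inr (pS, a'))) (Sum.inl (g3, a', cn)) :=
    adjCT rfl rfl hcnd
  -- assemble:  src -> sS -> gadget-in ~> gadget-out -> tS -> snk
  have t1 : (G n A U Vq Wq j a).edist (Sum.inl (g3, a', cn)) (snk hn) ≤
      ((Lv n j a + 1 : ℕ) : ℕ∞) := by
    have := estep hCT.symm hsnk
    exact ecast this (by omega)
  have t2 := etriangle hg0 t1
  have t3 := estep hCS t2
  have t4 : (G n A U Vq Wq j a).edist (src hn) (Sum.inr (Sum.inl (pS, a'))) ≤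
      ((Lv n j a : ℕ) : ℕ∞) := by
    rw [SimpleGraph.edist_comm]; exact hsrc
  have t5 := etriangle t4 t3
  refine ecast t5 ?_
  simp only [Dv]
  omega

end upperfull


section reverse
variable {n : ℕ} {A : Fin n → Fin n → Prop} {U Vq Wq : ℕ → Fin n → Prop} {j a : ℕ}
lemma s_bound (hn : 1 ≤ n) (hjn : j ≤ n)
    {w : (G n A U Vq Wq j a).Walk (src hn) (snk hn)}
    (hlen : w.length = Dv n j a)
    (hf : ∀ k, k ≤ Dv n j a → fval n j a (w.getVert k) = k) :
    ∀ k, k < Dv n j a → ∀ pb, w.getVert k = Sum.inr (Sum.inl pb) →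
      k + 1 ≤ Lv n j a + 2 := by
  intro k hk pb hgv
  have adj := w.adj_getVert_succ (i := k) (by omega)
  rw [hgv] at adj
  obtain ⟨p, b⟩ := pb
  have hv := hf (k+1) (by omega)
  rcases adj_s adj with ⟨p', b', hy, -⟩ | ⟨g', c', hy, hg0, hc0, -⟩
  · rw [hy] at hv; simp only [fval] at hv; omega
  · rw [hy] at hv; simp only [fval] at hv
    have hz : g'.val * (n - j + 2) = 0 := by rw [hg0]; ring
    split_ifs at hv <;> omega

lemma march_layer (hn : 1 ≤ n) (hj1 : 1 ≤ j) (hjn : j ≤ n)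
    {w : (G n A U Vq Wq j a).Walk (src hn) (snk hn)}
    (hlen : w.length = Dv n j a)
    (hf : ∀ k, k ≤ Dv n j a → fval n j a (w.getVert k) = k)
    (g : Fin 4) (i : Fin n) (c : Fin (n+1)) (k : ℕ)
    (hk : k = Lv n j a + 1 + g.val * (n - j + 2)) (hc : c.val = 0)
    (hgv : w.getVert k = Sum.inl (g, i, c)) :
    Pred n U Vq Wq g j i ∧ ∃ c' : Fin (n+1), c'.val = n ∧
      w.getVert (k + (n - j + 1)) = Sum.inl (g, i, c') := by
  have hgle : g.val ≤ 3 := by have := g.isLt; omega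
  have hm : g.val * (n - j + 2) ≤ 3 * (n - j + 2) := Nat.mul_le_mul_right _ (by omega)
  have hkD : k + (n - j + 2) ≤ Dv n j a := by simp only [Dv]; omega
  have adj1 := w.adj_getVert_succ (i := k) (by omega)
  rw [hgv] at adj1
  have hv1 := hf (k+1) (by omega)
  rcases adj_inl adj1 with ⟨c', hy, hcc⟩ | ⟨g', i', c', hy, hgeq, hcn, hc0, -⟩ |
    ⟨g', i', c', hy, hgeq, hcn, hc0, -⟩ | ⟨p, hy, hg0, hc0, -⟩ | ⟨p, hy, hg3, hcn, -⟩
  · rcases hcc with ⟨h1, h2⟩ | ⟨h1, h2⟩ | ⟨h1, h2, h3, hP⟩ | ⟨h1, h2, h3, hP⟩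
    · omega
    · omega
    · -- query edge out of (g,i,0); show c'.val = j
      have hcj : c'.val = j := by
        by_contra hne
        have adj2 := w.adj_getVert_succ (i := k+1) (by omega)
        rw [hy] at adj2
        have hv2 := hf (k+2) (by omega)
        have e12 : k + 1 + 1 = k + 2 := by omega
        rw [e12] at adj2
        rcases adj_inl adj2 with ⟨c'', hy2, hcc2⟩ | ⟨g2, i2, c2, hy2, hge2, hcn2, hc02, -⟩ |
          ⟨g2, i2, c2, hy2, hge2, hcn2, hc02, -⟩ | ⟨p, hy2, hg02, hc02, -⟩ |
          ⟨p, hy2, hg32, hcn2, -⟩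
        · rw [hy2] at hv2; simp only [fval] at hv2
          rcases hcc2 with ⟨e1, e2⟩ | ⟨e1, e2⟩ | ⟨e1, e2, e3, -⟩ | ⟨e1, e2, e3, -⟩ <;>
            split_ifs at hv2 <;> omega
        · omega
        · omega
        · omega
        · omega
      rw [hcj] at hP
      refine ⟨hP, ?_⟩
      have claim : ∀ e, e ≤ n - j → ∃ ce : Fin (n+1), ce.val = j + e ∧
          w.getVert (k + 1 + e) = Sum.inl (g, i, ce) := by
        intro e
        induction e with
        | zero => exact fun _ => ⟨c', by omega, hy⟩
        | succ e ih =>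
            intro he
            obtain ⟨ce, hce, hgve⟩ := ih (by omega)
            have adjE := w.adj_getVert_succ (i := k+1+e) (by omega)
            rw [hgve] at adjE
            have hvE := hf (k+1+e+1) (by omega)
            rcases adj_inl adjE with ⟨c'', hy2, hcc2⟩ |
              ⟨g2, i2, c2, hy2, hge2, hcn2, hc02, -⟩ |
              ⟨g2, i2, c2, hy2, hge2, hcn2, hc02, -⟩ | ⟨p, hy2, hg02, hc02, -⟩ |
              ⟨p, hy2, hg32, hcn2, -⟩
            · rcases hcc2 with ⟨e1, e2⟩ | ⟨e1, e2⟩ | ⟨e1, e2, e3, -⟩ | ⟨e1, e2, e3, -⟩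
              · exact ⟨c'', by omega, by rw [show k+1+(e+1) = k+1+e+1 by omega]; exact hy2⟩
              · rw [hy2] at hvE; simp only [fval] at hvE
                split_ifs at hvE <;> omega
              · omega
              · rw [hy2] at hvE; simp only [fval] at hvE
                split_ifs at hvE <;> omega
            · omega
            · omega
            · omega
            · omega
      obtain ⟨cn', hcn', hgvn⟩ := claim (n - j) le_rfl
      exact ⟨cn', by omega, by rw [show k+(n-j+1) = k+1+(n-j) by omega]; exact hgvn⟩
    · omega
  · omega
  · -- cross backward: impossible by potential
    rw [hy] at hv1; simp only [fval] at hv1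
    have hb : g.val * (n - j + 2) = g'.val * (n - j + 2) + (n - j + 2) := by
      rw [hgeq]; exact Nat.succ_mul _ _
    split_ifs at hv1 <;> omega
  · -- stepping back out to the source path: next step gets stuck
    have hz : g.val * (n - j + 2) = 0 := by rw [hg0]; ring
    have hsb := s_bound hn hjn hlen hf (k+1) (by omega) _ hy
    rw [hy] at hv1; simp only [fval] at hv1
    omega
  · omega

lemma march_cross (hn : 1 ≤ n) (hj1 : 1 ≤ j) (hjn : j ≤ n)
    {w : (G n A U Vq Wq j a).Walk (src hn) (snk hn)}
    (hlen : w.length = Dv n j a)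
    (hf : ∀ k, k ≤ Dv n j a → fval n j a (w.getVert k) = k)
    (g : Fin 4) (i : Fin n) (c : Fin (n+1)) (k : ℕ)
    (hk : k = Lv n j a + 1 + g.val * (n - j + 2) + (n - j + 1)) (hc : c.val = n)
    (hgle : g.val ≤ 2)
    (hgv : w.getVert k = Sum.inl (g, i, c)) :
    ∃ (g' : Fin 4) (i' : Fin n) (c' : Fin (n+1)), g'.val = g.val + 1 ∧ c'.val = 0 ∧
      A i i' ∧ w.getVert (k + 1) = Sum.inl (g', i', c') := by
  have hm : g.val * (n - j + 2) ≤ 2 * (n - j + 2) := Nat.mul_le_mul_right _ (by omega)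
  have hkD : k + 1 ≤ Dv n j a := by simp only [Dv]; omega
  have adj1 := w.adj_getVert_succ (i := k) (by omega)
  rw [hgv] at adj1
  have hv1 := hf (k+1) (by omega)
  rcases adj_inl adj1 with ⟨c', hy, hcc⟩ | ⟨g', i', c', hy, hgeq, hcn, hc0, hA⟩ |
    ⟨g', i', c', hy, hgeq, hcn, hc0, -⟩ | ⟨p, hy, hg0, hc0, -⟩ | ⟨p, hy, hg3, hcn, -⟩
  · -- same-row moves all have wrong potential
    rw [hy] at hv1; simp only [fval] at hv1
    rcases hcc with ⟨e1, e2⟩ | ⟨e1, e2⟩ | ⟨e1, e2, e3, -⟩ | ⟨e1, e2, e3, -⟩ <;>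
      [skip; skip; omega; skip] <;>
      · have := c'.isLt
        split_ifs at hv1 <;> omega
  · exact ⟨g', i', c', hgeq, hc0, hA, hy⟩
  · omega
  · omega
  · omega

end reverse


section mainrev
variable {n : ℕ} {A : Fin n → Fin n → Prop} {U Vq Wq : ℕ → Fin n → Prop} {j a : ℕ}

lemma exists_witness (hn : 1 ≤ n) (hj1 : 1 ≤ j) (hjn : j ≤ n) (ha1 : 1 ≤ a) (han : a ≤ n)
    (hEq : (G n A U Vq Wq j a).edist (src hn) (snk hn) = ((Dv n j a : ℕ) : ℕ∞)) :
    ∃ (a' b c : Fin n), a'.val = a - 1 ∧ U j a' ∧ Vq j b ∧ Wq j c ∧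
      A a' b ∧ A b c ∧ A c a' := by
  obtain ⟨w, hwl⟩ := SimpleGraph.exists_walk_of_edist_eq_coe hEq
  have hDL : Dv n j a = 2 * Lv n j a + 4 * (n - j) + 9 := rfl
  have hMe : Mv n j a = Lv n j a + 4 * (n - j) + 8 := rfl
  have hLS' := hLS (j := j) (a := a) hn hjn han
  -- potential equals the index along the walk
  have hup : ∀ k, k ≤ Dv n j a → fval n j a (w.getVert k) ≤ k := by
    intro k
    induction k with
    | zero =>
        intro _
        rw [w.getVert_zero, fval_src hn hjn han]
    | succ k ih =>
        intro hk
        have h1 := ih (by omega)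
        have adj := w.adj_getVert_succ (i := k) (by omega)
        have h2 := fval_lip hn hj1 hjn ha1 han adj
        omega
  have hdown : ∀ d k, k + d = Dv n j a → Dv n j a ≤ fval n j a (w.getVert k) + d := by
    intro d
    induction d with
    | zero =>
        intro k hk
        have hkl : k = w.length := by omega
        rw [hkl, w.getVert_length, fval_snk hn hjn han]
        omega
    | succ d ih =>
        intro k hk
        have h2 := ih (k + 1) (by omega)
        have adj := w.adj_getVert_succ (i := k) (by omega)
        have h3 := fval_lip hn hj1 hjn ha1 han adj
        omega
  have hf : ∀ k, k ≤ Dv n j a → fval n j a (w.getVert k) = k := by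
    intro k hk
    have h1 := hup k hk
    have h2 := hdown (Dv n j a - k) k (by omega)
    omega
  -- the vertex at level L+1 is a gadget entry vertex (0, i, 0)
  have hv1 := hf (Lv n j a + 1) (by omega)
  rcases hgv : w.getVert (Lv n j a + 1) with ⟨g, i, c⟩ | (⟨p, b⟩ | ⟨p, b⟩)
  rotate_left
  · -- an s-vertex at level L+1 : leads to a dead end
    exfalso
    have adj := w.adj_getVert_succ (i := Lv n j a + 1) (by omega)
    rw [hgv] at adj
    have hv2 := hf (Lv n j a + 1 + 1) (by omega)
    rcases adj_s adj with ⟨p', b', hy, -⟩ | ⟨g', c', hy, hg0, hc0, -⟩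
    · have := s_bound hn hjn hwl hf (Lv n j a + 1 + 1) (by omega) _ hy
      omega
    · rw [hy] at hv2; simp only [fval] at hv2
      have hz : g'.val * (n - j + 2) = 0 := by rw [hg0]; ring
      split_ifs at hv2 <;> omega
  · -- a t-vertex at level L+1 : impossible, potential too large
    exfalso
    rw [hgv] at hv1; simp only [fval, Mv, Dv] at hv1
    omega
  -- gadget vertex: extract g = 0, c = 0
  rw [hgv] at hv1; simp only [fval] at hv1
  have hgc : g.val = 0 ∧ c.val = 0 := by
    split_ifs at hv1 with hcz
    · constructor
      · have hz : g.val * (n - j + 2) = 0 := by omega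
        rcases Nat.mul_eq_zero.mp hz with h | h
        · exact h
        · omega
      · exact hcz
    · omega
  obtain ⟨hg0, hc0⟩ := hgc
  have prodz : g.val * (n - j + 2) = 0 := by rw [hg0]; ring
  -- the previous vertex is s_{j,a}, so i = a - 1
  have hia : i.val = a - 1 := by
    have adjL := w.adj_getVert_succ (i := Lv n j a) (by omega)
    rw [show Lv n j a + 1 = Lv n j a + 1 from rfl, hgv] at adjL
    have adjL' := adjL.symm
    have hvL := hf (Lv n j a) (by omega)
    rcases adj_inl adjL' with ⟨c', hy, hcc⟩ | ⟨g', i', c', hy, hgeq, hcn, hc0', -⟩ |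
      ⟨g', i', c', hy, hgeq, hcn, hc0', -⟩ | ⟨p, hy, hg0', hc0', -⟩ | ⟨p, hy, hg3, hcn, -⟩
    · rw [hy] at hvL; simp only [fval] at hvL
      split_ifs at hvL <;> omega
    · omega
    · omega
    · rw [hy] at hvL; simp only [fval] at hvL
      have hsl := sig_le p i
      have hsig : p.val * n + i.val = Sv n j a := by omega
      exact (cond_eq hj1 hjn ha1 han hsig).2
    · omega
  -- march through the four gadget layers
  have m0 := march_layer hn hj1 hjn hwl hf g i c (Lv n j a + 1) (by omega) hc0 hgv
  obtain ⟨P0, c0n, hc0n, hgv0n⟩ := m0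
  have hU0 : U j i := P0.1 (Or.inl hg0)
  have x0 := march_cross hn hj1 hjn hwl hf g i c0n (Lv n j a + 1 + (n - j + 1))
    (by omega) hc0n (by omega) hgv0n
  obtain ⟨g1, vb, c10, hg1, hc10, hAib, hgv1⟩ := x0
  have prod1 : g1.val * (n - j + 2) = (n - j + 2) := by
    have : g1.val = 1 := by omega
    rw [this]; ring
  have m1 := march_layer hn hj1 hjn hwl hf g1 vb c10 (Lv n j a + 1 + (n - j + 1) + 1)
    (by omega) hc10 hgv1
  obtain ⟨P1, c1n, hc1n, hgv1n⟩ := m1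
  have hV1 : Vq j vb := P1.2.1 (by omega)
  have x1 := march_cross hn hj1 hjn hwl hf g1 vb c1n
    (Lv n j a + 1 + (n - j + 1) + 1 + (n - j + 1)) (by omega) hc1n (by omega) hgv1n
  obtain ⟨g2, vc, c20, hg2, hc20, hAbc, hgv2⟩ := x1
  have prod2 : g2.val * (n - j + 2) = 2 * (n - j + 2) := by
    have : g2.val = 2 := by omega
    rw [this]
  have m2 := march_layer hn hj1 hjn hwl hf g2 vc c20
    (Lv n j a + 1 + (n - j + 1) + 1 + (n - j + 1) + 1) (by omega) hc20 hgv2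
  obtain ⟨P2, c2n, hc2n, hgv2n⟩ := m2
  have hW2 : Wq j vc := P2.2.2 (by omega)
  have x2 := march_cross hn hj1 hjn hwl hf g2 vc c2n
    (Lv n j a + 1 + (n - j + 1) + 1 + (n - j + 1) + 1 + (n - j + 1)) (by omega) hc2n
    (by omega) hgv2n
  obtain ⟨g3, i3, c30, hg3, hc30, hAci3, hgv3⟩ := x2
  have prod3 : g3.val * (n - j + 2) = 3 * (n - j + 2) := by
    have : g3.val = 3 := by omega
    rw [this]
  have m3 := march_layer hn hj1 hjn hwl hf g3 i3 c30
    (Lv n j a + 1 + (n - j + 1) + 1 + (n - j + 1) + 1 + (n - j + 1) + 1) (by omega)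
    hc30 hgv3
  obtain ⟨P3, c3n, hc3n, hgv3n⟩ := m3
  -- final step : exit to the sink path at t_{j,a}, forcing i3 = a - 1
  set kF := Lv n j a + 1 + (n - j + 1) + 1 + (n - j + 1) + 1 + (n - j + 1) + 1 + (n - j + 1)
    with hkF
  have adjF := w.adj_getVert_succ (i := kF) (by omega)
  rw [hgv3n] at adjF
  have hvF := hf (kF + 1) (by omega)
  have hi3 : i3.val = a - 1 := by
    rcases adj_inl adjF with ⟨c', hy, hcc⟩ | ⟨g', i', c', hy, hgeq, hcn, hc0', -⟩ |
      ⟨g', i', c', hy, hgeq, hcn, hc0', -⟩ | ⟨p, hy, hg0', hc0', -⟩ | ⟨p, hy, hg3', hcn', -⟩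
    · exfalso
      rw [hy] at hvF; simp only [fval] at hvF
      rcases hcc with ⟨e1, e2⟩ | ⟨e1, e2⟩ | ⟨e1, e2, e3, -⟩ | ⟨e1, e2, e3, -⟩ <;>
        [skip; skip; omega; skip] <;>
        · have := c'.isLt
          split_ifs at hvF <;> omega
    · exfalso; have := g'.isLt; omega
    · omega
    · omega
    · rw [hy] at hvF; simp only [fval, Mv, Dv] at hvF
      have hsl := sig_le p i3
      have hsig : p.val * n + i3.val = Sv n j a := by omega
      exact (cond_eq hj1 hjn ha1 han hsig).2
  have hii : i3 = i := Fin.ext (by omega)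
  rw [hii] at hAci3
  exact ⟨i, vb, vc, hia, hU0, hV1, hW2, hAib, hAbc, hAci3⟩

end mainrev

end OMv3C2



/-- Claim 2 of the OMv3 reduction: in the graph `G_{j,a}` obtained from the
query-gadget graph (with query index `j`) by adding the source path of
vertices `s_{p,b}`, the sink path of vertices `t_{p,b}`, and the connection
edges `s_{p,b} ~ (0,b,0)` and `t_{p,b} ~ (3,b,n)` for all `(p,b)` with `p < j`
or (`p = j` and `b ≤ a`), the extended distance from `s_{n,n}` to `t_{n,n}` is
at least `2n(n−j) + 2(n−a+1) + 3 + 4(n+1−j)`, with equality iff there are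
`b, c` with `U j a ∧ V j b ∧ W j c ∧ A a b ∧ A b c ∧ A c a`. -/
theorem omv3_reduction_stage_distance (n : ℕ) (hn : 1 ≤ n)
    (A : Fin n → Fin n → Prop) (U Vq Wq : ℕ → Fin n → Prop)
    (j a : ℕ) (hj1 : 1 ≤ j) (hjn : j ≤ n) (ha1 : 1 ≤ a) (han : a ≤ n)
    (Gja : SimpleGraph ((Fin 4 × Fin n × Fin (n + 1)) ⊕ ((Fin n × Fin n) ⊕ (Fin n × Fin n))))
    (hG : Gja = SimpleGraph.fromRel (fun x y =>
      -- gadget edges, with current query index `j`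
      (∃ x' y' : Fin 4 × Fin n × Fin (n + 1), x = Sum.inl x' ∧ y = Sum.inl y' ∧
        ((x'.1 = y'.1 ∧ x'.2.1 = y'.2.1 ∧ 1 ≤ (x'.2.2 : ℕ) ∧
            (y'.2.2 : ℕ) = (x'.2.2 : ℕ) + 1) ∨
         (x'.1 = y'.1 ∧ x'.2.1 = y'.2.1 ∧ (x'.2.2 : ℕ) = 0 ∧ 1 ≤ (y'.2.2 : ℕ) ∧
            (y'.2.2 : ℕ) ≤ j ∧
            (((x'.1 : ℕ) = 0 ∨ (x'.1 : ℕ) = 3) → U (y'.2.2 : ℕ) x'.2.1) ∧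
            ((x'.1 : ℕ) = 1 → Vq (y'.2.2 : ℕ) x'.2.1) ∧
            ((x'.1 : ℕ) = 2 → Wq (y'.2.2 : ℕ) x'.2.1)) ∨
         ((y'.1 : ℕ) = (x'.1 : ℕ) + 1 ∧ (x'.2.2 : ℕ) = n ∧ (y'.2.2 : ℕ) = 0 ∧
            A x'.2.1 y'.2.1))) ∨
      -- source path edges (lexicographic order)
      (∃ p q : Fin n × Fin n, x = Sum.inr (Sum.inl p) ∧ y = Sum.inr (Sum.inl q) ∧
        ((p.1 = q.1 ∧ (q.2 : ℕ) = (p.2 : ℕ) + 1) ∨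
         ((p.2 : ℕ) = n - 1 ∧ (q.2 : ℕ) = 0 ∧ (q.1 : ℕ) = (p.1 : ℕ) + 1))) ∨
      -- sink path edges (lexicographic order)
      (∃ p q : Fin n × Fin n, x = Sum.inr (Sum.inr p) ∧ y = Sum.inr (Sum.inr q) ∧
        ((p.1 = q.1 ∧ (q.2 : ℕ) = (p.2 : ℕ) + 1) ∨
         ((p.2 : ℕ) = n - 1 ∧ (q.2 : ℕ) = 0 ∧ (q.1 : ℕ) = (p.1 : ℕ) + 1))) ∨
      -- connection edges to the source path
      (∃ pb : Fin n × Fin n, x = Sum.inr (Sum.inl pb) ∧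
        y = Sum.inl (⟨0, by omega⟩, pb.2, ⟨0, by omega⟩) ∧
        ((pb.1 : ℕ) + 1 < j ∨ ((pb.1 : ℕ) + 1 = j ∧ (pb.2 : ℕ) + 1 ≤ a))) ∨
      -- connection edges to the sink path
      (∃ pb : Fin n × Fin n, x = Sum.inr (Sum.inr pb) ∧
        y = Sum.inl (⟨3, by omega⟩, pb.2, ⟨n, by omega⟩) ∧
        ((pb.1 : ℕ) + 1 < j ∨ ((pb.1 : ℕ) + 1 = j ∧ (pb.2 : ℕ) + 1 ≤ a))))) :
    (((2 * n * (n - j) + 2 * (n - a + 1) + 3 + 4 * (n + 1 - j) : ℕ) : ℕ∞) ≤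
        Gja.edist (Sum.inr (Sum.inl (⟨n - 1, by omega⟩, ⟨n - 1, by omega⟩)))
          (Sum.inr (Sum.inr (⟨n - 1, by omega⟩, ⟨n - 1, by omega⟩)))) ∧
      (Gja.edist (Sum.inr (Sum.inl (⟨n - 1, by omega⟩, ⟨n - 1, by omega⟩)))
          (Sum.inr (Sum.inr (⟨n - 1, by omega⟩, ⟨n - 1, by omega⟩))) =
          ((2 * n * (n - j) + 2 * (n - a + 1) + 3 + 4 * (n + 1 - j) : ℕ) : ℕ∞) ↔
        ∃ b c : Fin n, U j ⟨a - 1, by omega⟩ ∧ Vq j b ∧ Wq j c ∧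
          A ⟨a - 1, by omega⟩ b ∧ A b c ∧ A c ⟨a - 1, by omega⟩) := by
  subst hG
  have hDv := OMv3C2.hDval (n := n) (j := j) (a := a) hn hj1 hjn ha1 han
  have hlow : ((2 * n * (n - j) + 2 * (n - a + 1) + 3 + 4 * (n + 1 - j) : ℕ) : ℕ∞) ≤
      (OMv3C2.G n A U Vq Wq j a).edist (OMv3C2.src hn) (OMv3C2.snk hn) := by
    rw [← hDv]
    exact OMv3C2.lower_bound hn hj1 hjn ha1 han
  constructor
  · exact hlow
  constructor
  · intro h
    have hEq' : (OMv3C2.G n A U Vq Wq j a).edist (OMv3C2.src hn) (OMv3C2.snk hn) =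
        ((OMv3C2.Dv n j a : ℕ) : ℕ∞) := by
      rw [hDv]; exact h
    obtain ⟨a', b, c, ha', hU, hV, hW, h1, h2, h3⟩ :=
      OMv3C2.exists_witness hn hj1 hjn ha1 han hEq'
    have haa : (⟨a - 1, by omega⟩ : Fin n) = a' := Fin.ext (by simp only [OMv3C2.vmk]; omega)
    refine ⟨b, c, ?_, hV, hW, ?_, h2, ?_⟩ <;> rw [haa] <;> assumption
  · rintro ⟨b, c, hU, hV, hW, h1, h2, h3⟩
    have hub := OMv3C2.upper_bound hn hj1 hjn ha1 han _ b c rfl hU hV hW h1 h2 h3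
    have h4 : (OMv3C2.G n A U Vq Wq j a).edist (OMv3C2.src hn) (OMv3C2.snk hn) =
        ((OMv3C2.Dv n j a : ℕ) : ℕ∞) := le_antisymm hub (by rw [← hDv] at hlow; exact hlow)
    rw [hDv] at h4
    exact h4
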